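/- Let d ≥ 1, E ∈ GL(2d,ℝ), C ∈ Sym(2d,ℝ) and S ∈ Sp(d,ℝ), and set 𝒜 := 𝒟_{E^{−1}} · V_C · V_Lᵀ · Lift(S). Then 𝒜 ∈ Sp(2d,ℝ), its submatrices satisfy E_𝒜 = E and ℰ_𝒜 = E·L·S; in particular 𝒜 is shift-invertible and L·E_𝒜^{−1}·ℰ_𝒜 = S. -/
import Mathlib


open Matrix

/-- Index type for `2d × 2d` matrices, viewed as two `d`-blocks. -/
abbrev I2 (d : ℕ) := Fin d ⊕ Fin d

/-- Index type for `4d × 4d` matrices, viewed as four `d`-blocks. -/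
abbrev I4 (d : ℕ) := I2 d ⊕ I2 d

/-- The standard symplectic matrix `J = [[0, I], [-I, 0]]`. -/
def symplJ (α : Type*) [Fintype α] [DecidableEq α] : Matrix (α ⊕ α) (α ⊕ α) ℝ :=
  fromBlocks 0 1 (-1) 0

/-- `A` is symplectic if `Aᵀ J A = J`. -/
def IsSymplectic {α : Type*} [Fintype α] [DecidableEq α]
    (A : Matrix (α ⊕ α) (α ⊕ α) ℝ) : Prop :=
  Aᵀ * symplJ α * A = symplJ α

/-- Embedding of the "odd" block columns (blocks 1 and 3) of a `4d×4d` matrix. -/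
def colOdd (d : ℕ) : I2 d → I4 d :=
  Sum.elim (fun i => Sum.inl (Sum.inl i)) (fun i => Sum.inr (Sum.inl i))

/-- Embedding of the "even" block columns (blocks 2 and 4) of a `4d×4d` matrix. -/
def colEven (d : ℕ) : I2 d → I4 d :=
  Sum.elim (fun i => Sum.inl (Sum.inr i)) (fun i => Sum.inr (Sum.inr i))

/-- `E_𝒜 = [[A₁₁, A₁₃], [A₂₁, A₂₃]]`. -/
def subE {d : ℕ} (A : Matrix (I4 d) (I4 d) ℝ) : Matrix (I2 d) (I2 d) ℝ :=
  A.submatrix Sum.inl (colOdd d)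

/-- `ℰ_𝒜 = [[A₁₂, A₁₄], [A₂₂, A₂₄]]`. -/
def subEE {d : ℕ} (A : Matrix (I4 d) (I4 d) ℝ) : Matrix (I2 d) (I2 d) ℝ :=
  A.submatrix Sum.inl (colEven d)

/-- `F_𝒜 = [[A₃₁, A₃₃], [A₄₁, A₄₃]]`. -/
def subF {d : ℕ} (A : Matrix (I4 d) (I4 d) ℝ) : Matrix (I2 d) (I2 d) ℝ :=
  A.submatrix Sum.inr (colOdd d)

/-- `ℱ_𝒜 = [[A₃₂, A₃₄], [A₄₂, A₄₄]]`. -/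
def subFF {d : ℕ} (A : Matrix (I4 d) (I4 d) ℝ) : Matrix (I2 d) (I2 d) ℝ :=
  A.submatrix Sum.inr (colEven d)

/-- Row/column embedding of the `i`-th `d`-block (i = 1,2,3,4). -/
def r1 (d : ℕ) : Fin d → I4 d := fun i => Sum.inl (Sum.inl i)
def r2 (d : ℕ) : Fin d → I4 d := fun i => Sum.inl (Sum.inr i)
def r3 (d : ℕ) : Fin d → I4 d := fun i => Sum.inr (Sum.inl i)
def r4 (d : ℕ) : Fin d → I4 d := fun i => Sum.inr (Sum.inr i)

/-- The `d×d` block `A_{ij}` of a `4d×4d` matrix, given the row and column embeddings. -/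
def blk {d : ℕ} (A : Matrix (I4 d) (I4 d) ℝ) (ri cj : Fin d → I4 d) :
    Matrix (Fin d) (Fin d) ℝ :=
  A.submatrix ri cj

/-- The symmetric matrix `M_𝒜` associated with a symplectic `4d×4d` matrix `𝒜`. -/
def Mmat {d : ℕ} (A : Matrix (I4 d) (I4 d) ℝ) : Matrix (I2 d) (I2 d) ℝ :=
  fromBlocks
    ((blk A (r1 d) (r1 d))ᵀ * blk A (r3 d) (r1 d) + (blk A (r2 d) (r1 d))ᵀ * blk A (r4 d) (r1 d))
    ((blk A (r3 d) (r1 d))ᵀ * blk A (r1 d) (r3 d) + (blk A (r4 d) (r1 d))ᵀ * blk A (r2 d) (r3 d))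
    ((blk A (r1 d) (r3 d))ᵀ * blk A (r3 d) (r1 d) + (blk A (r2 d) (r3 d))ᵀ * blk A (r4 d) (r1 d))
    ((blk A (r1 d) (r3 d))ᵀ * blk A (r3 d) (r3 d) + (blk A (r2 d) (r3 d))ᵀ * blk A (r4 d) (r3 d))

/-- `𝒟_E = [[E⁻¹, 0], [0, Eᵀ]]`. -/
noncomputable def Dmat {α : Type*} [Fintype α] [DecidableEq α] (E : Matrix α α ℝ) :
    Matrix (α ⊕ α) (α ⊕ α) ℝ :=
  fromBlocks E⁻¹ 0 0 Eᵀ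

/-- `V_C = [[I, 0], [C, I]]`. -/
def Vmat {α : Type*} [Fintype α] [DecidableEq α] (C : Matrix α α ℝ) :
    Matrix (α ⊕ α) (α ⊕ α) ℝ :=
  fromBlocks 1 0 C 1

/-- `L = [[0, I], [I, 0]]` (`2d × 2d`). -/
def Lmat (d : ℕ) : Matrix (I2 d) (I2 d) ℝ :=
  fromBlocks 0 1 1 0

/-- `Lift(G)`: the `4d×4d` matrix with block rows `[I,0,0,0]`, `[0,G₁₁,0,G₁₂]`,
`[0,0,I,0]`, `[0,G₂₁,0,G₂₂]`. -/
def Lift {d : ℕ} (G : Matrix (I2 d) (I2 d) ℝ) : Matrix (I4 d) (I4 d) ℝ :=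
  fromBlocks
    (fromBlocks 1 0 0 (G.submatrix Sum.inl Sum.inl))
    (fromBlocks 0 0 0 (G.submatrix Sum.inl Sum.inr))
    (fromBlocks 0 0 0 (G.submatrix Sum.inr Sum.inl))
    (fromBlocks 1 0 0 (G.submatrix Sum.inr Sum.inr))

section Helpers

variable {α : Type*} [Fintype α] [DecidableEq α]

lemma isSymplectic_mul {A B : Matrix (α ⊕ α) (α ⊕ α) ℝ}
    (hA : IsSymplectic A) (hB : IsSymplectic B) : IsSymplectic (A * B) := by
  unfold IsSymplectic at *
  calc (A * B)ᵀ * symplJ α * (A * B) = Bᵀ * (Aᵀ * symplJ α * A) * B := by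
        rw [transpose_mul]; simp only [Matrix.mul_assoc]
    _ = symplJ α := by rw [hA, hB]

lemma Dmat_symplectic (E : Matrix α α ℝ) (hE : IsUnit E) : IsSymplectic (Dmat E) := by
  have hd : IsUnit E.det := (isUnit_iff_isUnit_det E).1 hE
  unfold IsSymplectic Dmat symplJ
  simp [fromBlocks_transpose, fromBlocks_multiply, ← transpose_mul,
    Matrix.mul_nonsing_inv _ hd, Matrix.nonsing_inv_mul _ hd]

lemma Vmat_symplectic (C : Matrix α α ℝ) (hC : C.IsSymm) : IsSymplectic (Vmat C) := by
  unfold IsSymplectic Vmat symplJ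
  simp [fromBlocks_transpose, fromBlocks_multiply, hC.eq]

lemma VmatT_symplectic (C : Matrix α α ℝ) (hC : C.IsSymm) : IsSymplectic (Vmat C)ᵀ := by
  unfold IsSymplectic Vmat symplJ
  simp [fromBlocks_transpose, fromBlocks_multiply, hC.eq]

end Helpers

lemma Lmat_isSymm (d : ℕ) : (Lmat d).IsSymm := by
  simp [Matrix.IsSymm, Lmat, fromBlocks_transpose]

lemma Lift_symplectic {d : ℕ} (S : Matrix (I2 d) (I2 d) ℝ) (hS : IsSymplectic S) :
    IsSymplectic (Lift S) := by
  set a := S.submatrix Sum.inl Sum.inl with ha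
  set b := S.submatrix Sum.inl Sum.inr with hb
  set c := S.submatrix Sum.inr Sum.inl with hc
  set e := S.submatrix Sum.inr Sum.inr with he
  have hSb : S = fromBlocks a b c e := (fromBlocks_toBlocks S).symm
  unfold IsSymplectic symplJ at hS
  rw [hSb] at hS
  simp only [fromBlocks_transpose, fromBlocks_multiply, Matrix.mul_one, Matrix.mul_zero,
    Matrix.zero_mul, Matrix.one_mul, add_zero, zero_add, Matrix.mul_neg, Matrix.neg_mul,
    Matrix.mul_assoc] at hS
  have h11 := congrArg Matrix.toBlocks₁₁ hS
  have h12 := congrArg Matrix.toBlocks₁₂ hS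
  have h21 := congrArg Matrix.toBlocks₂₁ hS
  have h22 := congrArg Matrix.toBlocks₂₂ hS
  simp only [Matrix.toBlocks_fromBlocks₁₁, Matrix.toBlocks_fromBlocks₁₂,
    Matrix.toBlocks_fromBlocks₂₁, Matrix.toBlocks_fromBlocks₂₂] at h11 h12 h21 h22
  have hJ : symplJ (I2 d) = fromBlocks (fromBlocks 0 0 0 0) (fromBlocks 1 0 0 1)
      (fromBlocks (-1) 0 0 (-1)) (fromBlocks 0 0 0 0) := by
    rw [symplJ, fromBlocks_zero, fromBlocks_one]
    rw [show (fromBlocks (-1) 0 0 (-1) : Matrix (I2 d) (I2 d) ℝ) = -fromBlocks 1 0 0 1 by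
      rw [fromBlocks_neg]; norm_num, fromBlocks_one]
  unfold IsSymplectic Lift
  rw [← ha, ← hb, ← hc, ← he, hJ]
  simp only [fromBlocks_transpose, fromBlocks_multiply, Matrix.mul_one, Matrix.mul_zero,
    Matrix.zero_mul, Matrix.one_mul, add_zero, zero_add, Matrix.mul_neg, Matrix.neg_mul,
    Matrix.mul_assoc, fromBlocks_add, add_zero, zero_add, neg_zero, transpose_one,
    transpose_zero]
  rw [h11, h12, h21, h22]
/-- For `E ∈ GL(2d,ℝ)`, `C ∈ Sym(2d,ℝ)`, `S ∈ Sp(d,ℝ)`, the matrix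
`𝒜 = 𝒟_{E⁻¹} · V_C · V_Lᵀ · Lift(S)` is symplectic, with `E_𝒜 = E`,
`ℰ_𝒜 = E·L·S`; in particular `𝒜` is shift-invertible and `L·E_𝒜⁻¹·ℰ_𝒜 = S`. -/
theorem alpha_blocks (d : ℕ) (hd : 1 ≤ d) (E C S : Matrix (I2 d) (I2 d) ℝ)
    (hE : IsUnit E) (hC : C.IsSymm) (hS : IsSymplectic S)
    (𝒜 : Matrix (I4 d) (I4 d) ℝ)
    (h𝒜 : 𝒜 = Dmat E⁻¹ * Vmat C * (Vmat (Lmat d))ᵀ * Lift S) :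
    IsSymplectic 𝒜 ∧ subE 𝒜 = E ∧ subEE 𝒜 = E * Lmat d * S ∧
    IsUnit (subE 𝒜) ∧ Lmat d * (subE 𝒜)⁻¹ * subEE 𝒜 = S := by
  have hdet : IsUnit E.det := (isUnit_iff_isUnit_det E).1 hE
  have hL : (Lmat d).IsSymm := Lmat_isSymm d
  have hsymp : IsSymplectic 𝒜 := by
    rw [h𝒜]
    exact isSymplectic_mul (isSymplectic_mul (isSymplectic_mul
      (Dmat_symplectic _ (Matrix.isUnit_nonsing_inv_iff.2 hE)) (Vmat_symplectic _ hC))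
      (VmatT_symplectic _ hL)) (Lift_symplectic _ hS)
  have hP : Dmat E⁻¹ * Vmat C * (Vmat (Lmat d))ᵀ
      = fromBlocks E (E * Lmat d) ((E⁻¹)ᵀ * C) ((E⁻¹)ᵀ * C * Lmat d + (E⁻¹)ᵀ) := by
    simp [Dmat, Vmat, fromBlocks_transpose, fromBlocks_multiply,
      nonsing_inv_nonsing_inv E hdet, hL.eq]
  have hE1 : subE 𝒜 = E := by
    rw [h𝒜, hP]
    ext i j
    cases j with
    | inl j =>
        simp [subE, colOdd, Lift, Matrix.mul_apply, Fintype.sum_sum_type,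
          Matrix.one_apply, Lmat, Finset.sum_ite_eq]
    | inr j =>
        simp [subE, colOdd, Lift, Matrix.mul_apply, Fintype.sum_sum_type,
          Matrix.one_apply, Lmat, Finset.sum_ite_eq]
  have hE2 : subEE 𝒜 = E * Lmat d * S := by
    rw [h𝒜, hP]
    ext i j
    cases j with
    | inl j =>
        simp [subEE, colEven, Lift, Matrix.mul_apply, Fintype.sum_sum_type,
          Matrix.one_apply, Lmat, Finset.sum_ite_eq, add_comm]
    | inr j =>
        simp [subEE, colEven, Lift, Matrix.mul_apply, Fintype.sum_sum_type,
          Matrix.one_apply, Lmat, Finset.sum_ite_eq, add_comm]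
  have hLL : Lmat d * Lmat d = 1 := by
    simp [Lmat, fromBlocks_multiply, fromBlocks_one]
  refine ⟨hsymp, hE1, hE2, hE1 ▸ hE, ?_⟩
  rw [hE1, hE2, Matrix.mul_assoc (Lmat d), ← Matrix.mul_assoc E⁻¹, ← Matrix.mul_assoc E⁻¹,
    nonsing_inv_mul E hdet, Matrix.one_mul, ← Matrix.mul_assoc, hLL, Matrix.one_mul]
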